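/- Let q : I → ℝ⁴ and l : I → ℝ be differentiable on an interval I, let δ : I → ℝ be any function and suppose l(t) ≠ 0 for all t ∈ I. If q satisfies the quaternion kite equations of motion q̇(t) = Φ(q(t)) (with parameters E, v_w, g_k, steering δ(t), tether length l(t) and winch speed l̇(t)), then the Euclidean norm ‖q(t)‖ is constant on I. -/

import Mathlib

noncomputable def kitePhi (E vw gk δ l ldot : ℝ) (q : EuclideanSpace ℝ (Fin 4)) :
    EuclideanSpace ℝ (Fin 4) :=
  let va := E * vw * (q 0 ^ 2 + q 1 ^ 2 - q 2 ^ 2 - q 3 ^ 2) - E * ldot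
  (va / (2 * l)) • (WithLp.toLp 2 ![-(q 2), -(q 3), q 0, q 1] : EuclideanSpace ℝ (Fin 4))
    + (vw / l) • (WithLp.toLp 2 ![q 0 * (q 2 ^ 2 + q 3 ^ 2), q 1 * (q 2 ^ 2 + q 3 ^ 2),
        -(q 2) * (q 0 ^ 2 + q 1 ^ 2), -(q 3) * (q 0 ^ 2 + q 1 ^ 2)] :
        EuclideanSpace ℝ (Fin 4))
    + (gk * va * δ / 2) • (WithLp.toLp 2 ![q 1, -(q 0), -(q 3), q 2] : EuclideanSpace ℝ (Fin 4))

/-- The state is always orthogonal to the kite vector field. -/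
lemma inner_kitePhi (E vw gk δ l ldot : ℝ) (q : EuclideanSpace ℝ (Fin 4)) :
    (inner ℝ q (kitePhi E vw gk δ l ldot q) : ℝ) = 0 := by
  simp [kitePhi, PiLp.inner_apply, Fin.sum_univ_four, Matrix.cons_val_zero,
    Matrix.cons_val_one, Matrix.head_cons, Fin.isValue]
  ring

/-- Along any solution of the quaternion kite equations of motion, the Euclidean
norm of the quaternion state is constant. -/
theorem kite_quaternion_norm_constant (E vw gk : ℝ) (I : Set ℝ) (hI : Convex ℝ I)
    (q : ℝ → EuclideanSpace ℝ (Fin 4)) (l δ ldot : ℝ → ℝ)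
    (hl : ∀ t ∈ I, l t ≠ 0)
    (hlde : ∀ t ∈ I, HasDerivWithinAt l (ldot t) I t)
    (hq : ∀ t ∈ I,
      HasDerivWithinAt q (kitePhi E vw gk (δ t) (l t) (ldot t) (q t)) I t) :
    ∀ s ∈ I, ∀ t ∈ I, ‖q s‖ = ‖q t‖ := by
  have hf : ∀ t ∈ I, HasDerivWithinAt (fun t => (inner ℝ (q t) (q t) : ℝ)) 0 I t := by
    intro t ht
    have h := (hq t ht).inner ℝ (hq t ht)
    have h1 := inner_kitePhi E vw gk (δ t) (l t) (ldot t) (q t)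
    have h2 : (inner ℝ (kitePhi E vw gk (δ t) (l t) (ldot t) (q t)) (q t) : ℝ) = 0 := by
      rw [real_inner_comm]; exact h1
    rw [h1, h2, add_zero] at h
    exact h
  intro s hs t ht
  have key : ‖(inner ℝ (q s) (q s) : ℝ) - inner ℝ (q t) (q t)‖ ≤ 0 * ‖s - t‖ :=
    hI.norm_image_sub_le_of_norm_hasDerivWithin_le hf (fun x hx => by simp) ht hs
  rw [zero_mul] at key
  have h2 : (inner ℝ (q s) (q s) : ℝ) = inner ℝ (q t) (q t) :=
    sub_eq_zero.mp (norm_le_zero_iff.mp key)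
  have := congrArg Real.sqrt h2
  rwa [real_inner_self_eq_norm_sq, real_inner_self_eq_norm_sq,
    Real.sqrt_sq (norm_nonneg _), Real.sqrt_sq (norm_nonneg _)] at this
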